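/- Fix u ≥ 1 and a finite set Val with v = |Val| ≥ 2, let Z be a finite set, let ε > 0, and let M : Val^u → Z → ℝ be a channel matrix satisfying ε-differential privacy with respect to the Hamming adjacency on Val^u. Then ∑_{z ∈ Z} max_{x ∈ Val^u} M x z ≤ (v · exp(ε) / (v − 1 + exp(ε)))^u. Equivalently, for every input distribution the min-entropy leakage satisfies I∞(X; Z) ≤ u · log₂(v · exp(ε) / (v − 1 + exp(ε))). -/

import Mathlib

/-- The Hamming graph on `Fin u → Val`: two tuples are adjacent iff they differ in
exactly one coordinate, i.e. their Hamming distance is `1`. -/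
def hammingGraph (u : ℕ) (Val : Type*) [DecidableEq Val] :
    SimpleGraph (Fin u → Val) where
  Adj x y := hammingDist x y = 1
  symm := by
    constructor
    intro x y h
    rwa [hammingDist_comm]
  loopless := by
    constructor
    intro x h
    simp [hammingDist_self] at h

lemma hamming_update_dist {u : ℕ} {Val : Type*} [DecidableEq Val]
    {x x' : Fin u → Val} {i : Fin u} (hi : x i ≠ x' i) :
    hammingDist x (Function.update x i (x' i)) = 1 ∧
    hammingDist (Function.update x i (x' i)) x' + 1 = hammingDist x x' := by
  constructor
  · rw [hammingDist]
    have : ({j | x j ≠ Function.update x i (x' i) j} : Finset (Fin u)) = {i} := by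
      ext j
      by_cases hj : j = i <;> simp [Function.update, hj, hi]
    rw [this, Finset.card_singleton]
  · rw [hammingDist, hammingDist]
    have h1 : ({j | Function.update x i (x' i) j ≠ x' j} : Finset (Fin u)) =
        ({j | x j ≠ x' j} : Finset (Fin u)).erase i := by
      ext j
      by_cases hj : j = i <;> simp [Function.update, hj]
    have h2 : i ∈ ({j | x j ≠ x' j} : Finset (Fin u)) := by simp [hi]
    rw [h1, Finset.card_erase_of_mem h2]
    have := Finset.card_pos.mpr ⟨i, h2⟩
    omega

/-- DP along paths: the ratio bound at Hamming distance `d`. -/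
lemma dp_dist_bound {u : ℕ} {Val : Type*} [Fintype Val] [DecidableEq Val]
    {Z : Type*} (ε : ℝ) (M : (Fin u → Val) → Z → ℝ)
    (hnn : ∀ x z, 0 ≤ M x z)
    (hdp : ∀ x x', (hammingGraph u Val).Adj x x' → ∀ z, M x z ≤ Real.exp ε * M x' z)
    (z : Z) : ∀ d : ℕ, ∀ x x' : Fin u → Val, hammingDist x x' = d →
      M x z ≤ Real.exp (ε * d) * M x' z := by
  intro d
  induction d with
  | zero =>
    intro x x' h
    rw [hammingDist_eq_zero] at h
    simp [h]
  | succ d ih =>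
    intro x x' h
    have hne : x ≠ x' := by
      intro he; rw [he, hammingDist_self] at h; omega
    obtain ⟨i, hi⟩ := Function.ne_iff.mp hne
    obtain ⟨h1, h2⟩ := hamming_update_dist hi
    set y := Function.update x i (x' i) with hy
    have hd : hammingDist y x' = d := by omega
    have step : M x z ≤ Real.exp ε * M y z := hdp x y h1 z
    have rest : M y z ≤ Real.exp (ε * d) * M x' z := ih y x' hd
    calc M x z ≤ Real.exp ε * M y z := step
      _ ≤ Real.exp ε * (Real.exp (ε * d) * M x' z) := by
          exact mul_le_mul_of_nonneg_left rest (Real.exp_pos ε).le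
      _ = Real.exp (ε * (d + 1 : ℕ)) * M x' z := by
          rw [← mul_assoc, ← Real.exp_add]
          push_cast
          ring_nf
    
/-- Geometric sum over the Hamming cube. -/
lemma hamming_sum_pow {u : ℕ} {Val : Type*} [Fintype Val] [DecidableEq Val]
    (t : ℝ) (x₀ : Fin u → Val) :
    ∑ x : Fin u → Val, t ^ hammingDist x x₀ =
      (1 + ((Fintype.card Val : ℝ) - 1) * t) ^ u := by
  have key : ∀ x : Fin u → Val, (t : ℝ) ^ hammingDist x x₀ =
      ∏ i, (if x i = x₀ i then (1 : ℝ) else t) := by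
    intro x
    rw [hammingDist, Finset.prod_ite, Finset.prod_const_one, one_mul, Finset.prod_const]
  calc ∑ x : Fin u → Val, t ^ hammingDist x x₀
      = ∑ x : Fin u → Val, ∏ i, (if x i = x₀ i then (1 : ℝ) else t) := by
        exact Finset.sum_congr rfl fun x _ => key x
    _ = ∏ i : Fin u, ∑ a : Val, (if a = x₀ i then (1 : ℝ) else t) := by
        rw [Fintype.prod_sum]
    _ = (1 + ((Fintype.card Val : ℝ) - 1) * t) ^ u := by
        have hc : ∀ i : Fin u, ∑ a : Val, (if a = x₀ i then (1 : ℝ) else t)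
            = 1 + ((Fintype.card Val : ℝ) - 1) * t := by
          intro i
          rw [Finset.sum_ite, Finset.sum_const, Finset.sum_const]
          rw [Finset.filter_eq', if_pos (Finset.mem_univ _)]
          have : (Finset.univ.filter fun a : Val => ¬ a = x₀ i).card
              = Fintype.card Val - 1 := by
            rw [Finset.filter_not, Finset.card_sdiff_of_subset (Finset.filter_subset _ _)]
            rw [Finset.filter_eq', if_pos (Finset.mem_univ _), Finset.card_singleton,
              Finset.card_univ]
          rw [this, Finset.card_singleton]
          have hcard : 1 ≤ Fintype.card Val := Fintype.card_pos_iff.mpr ⟨x₀ i⟩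
          simp only [nsmul_eq_mul, Nat.cast_sub hcard]
          push_cast
          ring
        rw [Finset.prod_congr rfl fun i _ => hc i, Finset.prod_const, Finset.card_univ,
          Fintype.card_fin]

/-- **bound on the min-entropy leakage.** Let `M` be a channel matrix on
`Val^u × Z` satisfying `ε`-differential privacy with respect to the Hamming adjacency.
Then `∑_z max_x M x z ≤ (v * e^ε / (v - 1 + e^ε))^u`; equivalently, the min-entropy
leakage (which is maximized by the uniform input distribution, where it equals
`log₂ (∑_z max_x M x z)`) is at most `u * log₂ (v * e^ε / (v - 1 + e^ε))`. -/
theorem dp_leakage_bound (u : ℕ) (hu : 1 ≤ u)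
    (Val : Type*) [Fintype Val] [DecidableEq Val]
    (hv : 2 ≤ Fintype.card Val) {Z : Type*} [Fintype Z]
    (ε : ℝ) (hε : 0 < ε) (M : (Fin u → Val) → Z → ℝ)
    (hnn : ∀ x z, 0 ≤ M x z) (hrow : ∀ x, ∑ z, M x z = 1)
    (hdp : ∀ x x', (hammingGraph u Val).Adj x x' → ∀ z, M x z ≤ Real.exp ε * M x' z) :
    (∑ z, ⨆ x, M x z) ≤
      ((Fintype.card Val : ℝ) * Real.exp ε /
        ((Fintype.card Val : ℝ) - 1 + Real.exp ε)) ^ u ∧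
    Real.logb 2 (∑ z, ⨆ x, M x z) ≤
      (u : ℝ) * Real.logb 2 ((Fintype.card Val : ℝ) * Real.exp ε /
        ((Fintype.card Val : ℝ) - 1 + Real.exp ε)) := by
  have hval : Nonempty Val := Fintype.card_pos_iff.mp (by omega)
  set v := (Fintype.card Val : ℝ) with hvdef
  have he : (0:ℝ) < Real.exp ε := Real.exp_pos ε
  have hv1 : (2:ℝ) ≤ v := by rw [hvdef]; exact_mod_cast hv
  have hden : (0:ℝ) < v - 1 + Real.exp ε := by linarith
  set R := v * Real.exp ε / (v - 1 + Real.exp ε) with hR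
  have hchoice : ∀ z : Z, ∃ x : Fin u → Val, ∀ y, M y z ≤ M x z := fun z =>
    Finite.exists_max (fun x => M x z)
  choose xm hxm using hchoice
  have hsup : ∀ z, (⨆ x, M x z) = M (xm z) z := by
    intro z
    exact le_antisymm (ciSup_le (hxm z))
      (le_ciSup (f := fun x => M x z) (Set.Finite.bddAbove (Set.finite_range _)) (xm z))
  set S := (1 + (v - 1) * Real.exp (-ε)) ^ u with hS
  have hS_pos : 0 < S := by
    apply pow_pos
    have := Real.exp_pos (-ε)
    nlinarith
  have hkey : ∀ z, M (xm z) z * S ≤ ∑ x, M x z := by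
    intro z
    have hSeq : ∑ x : Fin u → Val, Real.exp (-ε) ^ hammingDist x (xm z) = S :=
      hamming_sum_pow _ _
    rw [← hSeq, Finset.mul_sum]
    apply Finset.sum_le_sum
    intro x _
    have hd := dp_dist_bound ε M hnn hdp z (hammingDist (xm z) x) (xm z) x rfl
    have h1 : Real.exp (-ε) ^ hammingDist x (xm z)
        = Real.exp (-(ε * (hammingDist (xm z) x : ℕ))) := by
      rw [← Real.exp_nat_mul, hammingDist_comm x (xm z)]
      congr 1
      push_cast
      ring
    rw [h1]
    calc M (xm z) z * Real.exp (-(ε * (hammingDist (xm z) x : ℕ)))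
        ≤ (Real.exp (ε * (hammingDist (xm z) x : ℕ)) * M x z) *
            Real.exp (-(ε * (hammingDist (xm z) x : ℕ))) :=
          mul_le_mul_of_nonneg_right hd (Real.exp_pos _).le
      _ = M x z := by
          rw [mul_comm (Real.exp _), mul_assoc, ← Real.exp_add]
          simp
  have hsum_le : (∑ z, M (xm z) z) * S ≤ v ^ u := by
    rw [Finset.sum_mul]
    calc ∑ z, M (xm z) z * S ≤ ∑ z, ∑ x, M x z := Finset.sum_le_sum fun z _ => hkey z
      _ = ∑ x : Fin u → Val, ∑ z, M x z := Finset.sum_comm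
      _ = ∑ _x : Fin u → Val, (1:ℝ) := Finset.sum_congr rfl fun x _ => hrow x
      _ = v ^ u := by
          rw [Finset.sum_const, Finset.card_univ, Fintype.card_fun, nsmul_eq_mul, mul_one]
          push_cast [Fintype.card_fin]
          rfl
  have hRS : R ^ u * S = v ^ u := by
    rw [hS, hR, ← mul_pow]
    congr 1
    rw [Real.exp_neg]
    field_simp
    ring
  have part1 : (∑ z, ⨆ x, M x z) ≤ R ^ u := by
    have h2 : (∑ z, ⨆ x, M x z) = ∑ z, M (xm z) z :=
      Finset.sum_congr rfl fun z _ => hsup z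
    rw [h2, ← mul_le_mul_iff_left₀ hS_pos, hRS]
    exact hsum_le
  have hpos : (1:ℝ) ≤ ∑ z, ⨆ x, M x z := by
    obtain ⟨a⟩ := hval
    have hx0 : (1:ℝ) = ∑ z, M (fun _ => a) z := (hrow _).symm
    rw [hx0]
    exact Finset.sum_le_sum fun z _ => by rw [hsup z]; exact hxm z _
  refine ⟨part1, ?_⟩
  rw [← Real.logb_pow]
  exact Real.logb_le_logb_of_le one_lt_two (by linarith) part1
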